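/- arXiv:2210.07051 — 2 statements merged into one kernel-verified Lean document; each statement's English description precedes it below -/
import Mathlib

section
/- Let D be a finite set with |D| = n ≥ 1 and let d₁, …, d_m (m ≤ n) be pairwise distinct elements of D. Then there exists a function e : D → ℤ with 1 ≤ e(d) ≤ n for all d ∈ D such that e(d_{i+1}) ≥ e(d_i) + 1 for every 1 ≤ i < m; consequently, for every pair (d, d') ∈ D × D, the Miller–Tucker–Zemlin inequality e(d) − e(d') + n·g ≤ n − 1 is satisfied whenever g = 0, and it is also satisfied with g = 1 for each consecutive pair (d_i, d_{i+1}) of the sequence. -/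
/-- Validity of the MTZ constraints: every sequence of `m ≤ (Fintype.card D : ℤ) = |D|` pairwise
distinct destinations admits a potential `e : D → ℤ` with values in `[1, n]`
increasing strictly along the sequence; consequently the MTZ inequality holds
with `g = 0` for every pair, and with `g = 1` for every consecutive pair. -/
theorem mtz_valid_assignment {D : Type*} [Fintype D]
    (hn : 1 ≤ Fintype.card D) (m : ℕ) (hm : m ≤ Fintype.card D)
    (d : Fin m → D) (hd : Function.Injective d) :
    ∃ e : D → ℤ,
      (∀ x : D, 1 ≤ e x ∧ e x ≤ (Fintype.card D : ℤ)) ∧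
      (∀ (i : Fin m) (h : (i : ℕ) + 1 < m), e (d i) + 1 ≤ e (d ⟨(i : ℕ) + 1, h⟩)) ∧
      (∀ x y : D,
        e x - e y + (Fintype.card D : ℤ) * 0 ≤ (Fintype.card D : ℤ) - 1) ∧
      (∀ (i : Fin m) (h : (i : ℕ) + 1 < m),
        e (d i) - e (d ⟨(i : ℕ) + 1, h⟩) + (Fintype.card D : ℤ) * 1
          ≤ (Fintype.card D : ℤ) - 1) := by
  classical
  refine ⟨fun x => if h : ∃ i : Fin m, d i = x then ((Classical.choose h).val : ℤ) + 1 else 1,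
    ?_, ?_, ?_, ?_⟩
  · intro x
    by_cases h : ∃ i : Fin m, d i = x
    · simp only [dif_pos h]
      constructor
      · omega
      · have : (Classical.choose h).val < m := (Classical.choose h).isLt
        have : (Classical.choose h).val + 1 ≤ Fintype.card D := by omega
        exact_mod_cast this
    · simp only [dif_neg h]
      exact ⟨le_refl _, by exact_mod_cast hn⟩
  · intro i h
    have h1 : ∃ j : Fin m, d j = d i := ⟨i, rfl⟩
    have h2 : ∃ j : Fin m, d j = d ⟨(i : ℕ) + 1, h⟩ := ⟨⟨(i : ℕ) + 1, h⟩, rfl⟩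
    have e1 : Classical.choose h1 = i := hd (Classical.choose_spec h1)
    have e2 : Classical.choose h2 = ⟨(i : ℕ) + 1, h⟩ := hd (Classical.choose_spec h2)
    simp only [dif_pos h1, dif_pos h2, e1, e2]
    push_cast
    omega
  · intro x y
    have hx : (if h : ∃ i : Fin m, d i = x then ((Classical.choose h).val : ℤ) + 1 else 1)
        ≤ (Fintype.card D : ℤ) := by
      by_cases h : ∃ i : Fin m, d i = x
      · simp only [dif_pos h]
        have : (Classical.choose h).val + 1 ≤ Fintype.card D := by
          have := (Classical.choose h).isLt; omega
        exact_mod_cast this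
      · simp only [dif_neg h]; exact_mod_cast hn
    have hy : (1 : ℤ) ≤ if h : ∃ i : Fin m, d i = y
        then ((Classical.choose h).val : ℤ) + 1 else 1 := by
      by_cases h : ∃ i : Fin m, d i = y
      · simp only [dif_pos h]; omega
      · simp [dif_neg h]
    linarith
  · intro i h
    have h1 : ∃ j : Fin m, d j = d i := ⟨i, rfl⟩
    have h2 : ∃ j : Fin m, d j = d ⟨(i : ℕ) + 1, h⟩ := ⟨⟨(i : ℕ) + 1, h⟩, rfl⟩
    have e1 : Classical.choose h1 = i := hd (Classical.choose_spec h1)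
    have e2 : Classical.choose h2 = ⟨(i : ℕ) + 1, h⟩ := hd (Classical.choose_spec h2)
    simp only [dif_pos h1, dif_pos h2, e1, e2]
    push_cast
    omega
end

section
/- Let V be a finite set of locations containing a distinguished depot d₀, let S ⊆ V with d₀ ∉ S and S nonempty, and let E ⊆ V × V be a set of directed arcs. Suppose: (i) every arc of E has both endpoints in S ∪ {d₀}; (ii) every vertex v ∈ S ∪ {d₀} has exactly one outgoing arc in E and exactly one incoming arc in E; and (iii) there exists e : V → ℤ with e(d') ≥ e(d) + 1 for every arc (d, d') ∈ E with d ≠ d₀ and d' ≠ d₀. Then E is the arc set of a single directed cycle through the depot: there is an enumeration d₁, …, d_m of all elements of S (with m = |S|) such that E = {(d₀, d₁)} ∪ {(d_i, d_{i+1}) : 1 ≤ i < m} ∪ {(d_m, d₀)}. -/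
/-- Combined correctness of the routing constraints for one truck: if every
arc of `E` has both endpoints in `S ∪ {d₀}`, every such vertex has exactly one
outgoing and one incoming arc in `E`, and there is an integer potential
increasing strictly along every arc between non-depot vertices, then `E` is
the arc set of a single directed cycle through the depot visiting each
element of `S` exactly once. -/
theorem routing_single_tour {V : Type*} [Fintype V] [DecidableEq V]
    (d₀ : V) (S : Finset V) (hS : S.Nonempty) (hd₀ : d₀ ∉ S)
    (E : Set (V × V))
    (hend : ∀ p ∈ E, (p.1 ∈ S ∨ p.1 = d₀) ∧ (p.2 ∈ S ∨ p.2 = d₀))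
    (hout : ∀ v : V, v ∈ S ∨ v = d₀ → ∃! w : V, (v, w) ∈ E)
    (hin : ∀ v : V, v ∈ S ∨ v = d₀ → ∃! w : V, (w, v) ∈ E)
    (e : V → ℤ)
    (hMTZ : ∀ d d', (d, d') ∈ E → d ≠ d₀ → d' ≠ d₀ → e d + 1 ≤ e d') :
    ∃ (m : ℕ) (hm : 0 < m) (d : Fin m → V),
      m = S.card ∧ Function.Injective d ∧ Set.range d = ↑S ∧
      E = {(d₀, d ⟨0, hm⟩)} ∪
            {p : V × V | ∃ (i : Fin m) (h : (i : ℕ) + 1 < m),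
              p = (d i, d ⟨(i : ℕ) + 1, h⟩)} ∪
            {(d ⟨m - 1, Nat.sub_lt hm Nat.one_pos⟩, d₀)} := by
  classical
  choose! f h1 h2 using hout
  set P : V → Prop := fun v => v ∈ S ∨ v = d₀ with hPdef
  have Pd₀ : P d₀ := Or.inr rfl
  have hfP : ∀ v, P v → P (f v) := fun v hv => (hend _ (h1 v hv)).2
  have hf_inj : ∀ u v, P u → P v → f u = f v → u = v := by
    intro u v hu hv huv
    obtain ⟨w, hw, hwu⟩ := hin (f v) (hfP v hv)
    have h1u : (u, f v) ∈ E := huv ▸ h1 u hu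
    rw [hwu u h1u, hwu v (h1 v hv)]
  set g : ℕ → V := fun k => f^[k] d₀ with hgdef
  have gP : ∀ k, P (g k) := by
    intro k; induction k with
    | zero => exact Pd₀
    | succ k ih => rw [hgdef]; simp only [Function.iterate_succ_apply']; exact hfP _ ih
  have PIter : ∀ k v, P v → P (f^[k] v) := by
    intro k; induction k with
    | zero => intro v hv; exact hv
    | succ k ih => intro v hv; rw [Function.iterate_succ_apply']; exact hfP _ (ih v hv)
  have cancel : ∀ k u v, P u → P v → f^[k] u = f^[k] v → u = v := by
    intro k; induction k with
    | zero => intro u v _ _ h; exact h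
    | succ k ih =>
      intro u v hu hv h
      rw [Function.iterate_succ_apply', Function.iterate_succ_apply'] at h
      exact ih u v hu hv (hf_inj _ _ (PIter k u hu) (PIter k v hv) h)
  -- every P-vertex returns to itself
  have hperiod : ∀ v, P v → ∃ q, 0 < q ∧ f^[q] v = v := by
    intro v hv
    set T : Finset V := insert d₀ S with hT
    have hmem : ∀ k, f^[k] v ∈ T := by
      intro k; rcases PIter k v hv with h | h
      · exact Finset.mem_insert_of_mem h
      · rw [h]; exact Finset.mem_insert_self _ _
    obtain ⟨a, b, hab, heq⟩ := Fintype.exists_ne_map_eq_of_card_lt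
      (fun i : Fin (T.card + 1) => (⟨f^[(i : ℕ)] v, hmem _⟩ : T)) (by simp)
    have heq' : f^[(a : ℕ)] v = f^[(b : ℕ)] v := congrArg Subtype.val heq
    rcases Nat.lt_or_ge (a : ℕ) (b : ℕ) with h | h
    · refine ⟨(b : ℕ) - a, by omega, ?_⟩
      apply cancel a _ _ (PIter _ _ hv) hv
      rw [← Function.iterate_add_apply]
      rw [show (a : ℕ) + ((b : ℕ) - a) = b by omega]
      exact heq'.symm
    · have h' : (b : ℕ) < a := by
        rcases lt_or_eq_of_le h with h | h
        · exact h
        · exact absurd (Fin.ext h.symm) hab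
      refine ⟨(a : ℕ) - b, by omega, ?_⟩
      apply cancel b _ _ (PIter _ _ hv) hv
      rw [← Function.iterate_add_apply]
      rw [show (b : ℕ) + ((a : ℕ) - b) = a by omega]
      exact heq'
  -- the minimal period of d₀
  have hexp : ∃ p, 0 < p ∧ g p = d₀ := hperiod d₀ Pd₀
  set p := Nat.find hexp with hpdef
  obtain ⟨hppos, hgp⟩ : 0 < p ∧ g p = d₀ := Nat.find_spec hexp
  have hpmin : ∀ q, 0 < q → q < p → g q ≠ d₀ := by
    intro q hq hqp hg
    exact Nat.find_min hexp hqp ⟨hq, hg⟩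
  -- periodicity
  have hshift : ∀ x, g (x + p) = g x := by
    intro x
    show f^[x + p] d₀ = f^[x] d₀
    have hgp' : f^[p] d₀ = d₀ := hgp
    rw [Function.iterate_add_apply, hgp']
  have hmul : ∀ N r, g (N * p + r) = g r := by
    intro N; induction N with
    | zero => intro r; simp
    | succ N ih =>
      intro r
      rw [show (N + 1) * p + r = (N * p + r) + p by ring, hshift, ih]
  have hmod : ∀ k, g (k % p) = g k := by
    intro k
    conv_rhs => rw [← Nat.div_add_mod k p, Nat.mul_comm]
    rw [hmul]
  -- MTZ: no cycle avoids d₀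
  have hnocycle : ∀ v, P v → (∀ j, f^[j] v ≠ d₀) → False := by
    intro v hv hnd
    obtain ⟨q, hq, hgq⟩ := hperiod v hv
    have hgrow : ∀ j, e v + j ≤ e (f^[j] v) := by
      intro j; induction j with
      | zero => simp
      | succ j ih =>
        have harc : (f^[j] v, f (f^[j] v)) ∈ E := h1 _ (PIter j v hv)
        have hnd' := hnd (j + 1)
        rw [Function.iterate_succ_apply'] at hnd'
        have := hMTZ _ _ harc (hnd j) hnd'
        rw [Function.iterate_succ_apply']
        push_cast
        omega
    have := hgrow q
    rw [hgq] at this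
    omega
  -- the orbit covers all P-vertices
  have hcover : ∀ v, P v → ∃ k, k < p ∧ g k = v := by
    intro v hv
    by_contra hcon
    push_neg at hcon
    apply hnocycle v hv
    intro j hj
    -- then v is on the orbit of d₀
    have h1' : g (j * p) = d₀ := by
      rw [show j * p = j * p + 0 by ring, hmul]; rfl
    have hle : j ≤ j * p := Nat.le_mul_of_pos_right j hppos
    have h2' : f^[j] (g (j * p - j)) = f^[j] v := by
      show f^[j] (f^[j * p - j] d₀) = f^[j] v
      rw [← Function.iterate_add_apply, show j + (j * p - j) = j * p by omega]
      rw [hj]; exact h1'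
    have hveq : g (j * p - j) = v := cancel j _ _ (gP _) hv h2'
    exact hcon ((j * p - j) % p) (Nat.mod_lt _ hppos) (by rw [hmod]; exact hveq)
  -- orbit injective on [0, p)
  have hginj : ∀ a b, a < p → b < p → g a = g b → a = b := by
    have key : ∀ a b, a < b → b < p → g a = g b → False := by
      intro a b hab hbp hg
      have : f^[a] (g (b - a)) = f^[a] d₀ := by
        show f^[a] (f^[b - a] d₀) = f^[a] d₀
        rw [← Function.iterate_add_apply, show a + (b - a) = b by omega]
        exact hg.symm
      exact hpmin (b - a) (by omega) (by omega) (cancel a _ _ (gP _) Pd₀ this)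
    intro a b ha hb hg
    rcases Nat.lt_trichotomy a b with h | h | h
    · exact absurd (key a b h hb hg) (by simp)
    · exact h
    · exact absurd (key b a h ha hg.symm) (by simp)
  -- p = S.card + 1
  have hpcard : p = S.card + 1 := by
    have himg : (Finset.range p).image g = insert d₀ S := by
      apply Finset.ext
      intro v
      simp only [Finset.mem_image, Finset.mem_range, Finset.mem_insert]
      constructor
      · rintro ⟨k, hk, rfl⟩
        rcases gP k with h | h
        · exact Or.inr h
        · exact Or.inl h
      · rintro (rfl | hv)
        · exact ⟨0, hppos, rfl⟩
        · obtain ⟨k, hk, hgk⟩ := hcover v (Or.inl hv)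
          exact ⟨k, hk, hgk⟩
    have hc1 : ((Finset.range p).image g).card = p := by
      rw [Finset.card_image_of_injOn, Finset.card_range]
      intro a ha b hb hg
      exact hginj a b (Finset.mem_range.mp ha) (Finset.mem_range.mp hb) hg
    rw [himg, Finset.card_insert_of_notMem hd₀] at hc1
    omega
  set m := S.card with hmdef
  have hm : 0 < m := Finset.card_pos.mpr hS
  have hsucc : ∀ k, g (k + 1) = f (g k) := by
    intro k; show f^[k + 1] d₀ = f (f^[k] d₀); rw [Function.iterate_succ_apply']
  refine ⟨m, hm, fun i => g ((i : ℕ) + 1), rfl, ?_, ?_, ?_⟩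
  · -- injectivity
    intro i j hij
    exact Fin.ext (by
      have := hginj ((i : ℕ) + 1) ((j : ℕ) + 1) (by omega) (by omega) hij
      omega)
  · -- range = S
    ext v
    simp only [Set.mem_range, Finset.coe_sort_coe, Finset.mem_coe]
    constructor
    · rintro ⟨i, rfl⟩
      rcases gP ((i : ℕ) + 1) with h | h
      · exact h
      · exact absurd h (hpmin _ (by omega) (by omega))
    · intro hv
      obtain ⟨k, hk, hgk⟩ := hcover v (Or.inl hv)
      have hk0 : k ≠ 0 := by
        rintro rfl
        rw [← hgk] at hv
        exact hd₀ hv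
      refine ⟨⟨k - 1, by omega⟩, ?_⟩
      simp only
      rw [show k - 1 + 1 = k by omega]
      exact hgk
  · -- arc set equality
    have hnext : ∀ q ∈ E, q.2 = f q.1 := by
      intro q hq
      exact h2 q.1 (hend q hq).1 q.2 hq
    ext q
    simp only [Set.mem_union, Set.mem_singleton_iff, Set.mem_setOf_eq]
    constructor
    · intro hq
      obtain ⟨k, hk, hgk⟩ := hcover q.1 (hend q hq).1
      have hq2 : q.2 = f (g k) := by rw [hnext q hq, hgk]
      have hqeq : q = (g k, g (k + 1)) := by
        rw [hsucc]
        exact Prod.ext hgk.symm hq2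
      rcases Nat.eq_zero_or_pos k with rfl | hk0
      · left; left
        rw [hqeq]
        rfl
      · rcases Nat.lt_or_ge (k + 1) p with hk1 | hk1
        · left; right
          refine ⟨⟨k - 1, by omega⟩, (by omega : k - 1 + 1 < m), ?_⟩
          simp only
          rw [show k - 1 + 1 = k by omega, hqeq]
        · right
          have hkp : k = m := by omega
          have : g (k + 1) = d₀ := by
            rw [show k + 1 = p by omega, hgp]
          rw [hqeq, this, hkp]
          rw [show m - 1 + 1 = m by omega]
    · rintro ((rfl | ⟨i, hi, rfl⟩) | rfl)
      · exact h1 d₀ Pd₀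
      · rw [hsucc ((i : ℕ) + 1)]
        exact h1 _ (gP _)
      · have : d₀ = f (g (m - 1 + 1)) := by
          rw [← hsucc, show m - 1 + 1 + 1 = p by omega, hgp]
        rw [this]
        exact h1 _ (gP _)
end
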